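/- [First part of Claim 3 in the proof of Lemma 2] Assume there are no redundant actions for the decision-maker and that ū is concave on Δ(Ω) (i.e., ū(t·π + (1−t)·π') ≥ t·ū(π) + (1−t)·ū(π') for all π, π' ∈ Δ(Ω) and t ∈ [0,1]). Let a, a' ∈ Â and let π belong to the intrinsic (relative) interior of BR⁻¹(a) := {π ∈ Δ(Ω) : v(a,π) = v̄(π)}. Then u(a', π) ≥ u(a, π). -/
import Mathlib


open Finset

variable {Ω A : Type*}

/-- Expected payoff of mixed action `α` at belief `π` (bilinear extension of `u`). -/
noncomputable def pay [Fintype Ω] [Fintype A] (u : A → Ω → ℝ) (α : A → ℝ) (π : Ω → ℝ) : ℝ :=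
  ∑ a, ∑ ω, α a * π ω * u a ω

/-- Expected payoff of pure action `a` at belief `π`. -/
noncomputable def payP [Fintype Ω] (u : A → Ω → ℝ) (a : A) (π : Ω → ℝ) : ℝ :=
  ∑ ω, π ω * u a ω

/-- Pure best replies of the decision-maker at belief `π`. -/
def br [Fintype Ω] (v : A → Ω → ℝ) (π : Ω → ℝ) : Set A :=
  {a | ∀ a', payP v a' π ≤ payP v a π}

/-- Mixed best replies of the decision-maker at belief `π`. -/
def BR [Fintype Ω] [Fintype A] (v : A → Ω → ℝ) (π : Ω → ℝ) : Set (A → ℝ) :=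
  {α ∈ stdSimplex ℝ A | ∀ α' ∈ stdSimplex ℝ A, pay v α' π ≤ pay v α π}

/-- The expert value function `ū(π) = max_{α ∈ BR(π)} u(α, π)`. -/
noncomputable def ubar [Fintype Ω] [Fintype A] (u v : A → Ω → ℝ) (π : Ω → ℝ) : ℝ :=
  sSup ((fun α => pay u α π) '' BR v π)

/-- The decision-maker value function `v̄(π) = max_a v(a, π)`. -/
noncomputable def vbar [Fintype Ω] [Fintype A] (v : A → Ω → ℝ) (π : Ω → ℝ) : ℝ :=
  ⨆ a, payP v a π

/-- Actions that are a best reply to some belief. -/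
def Ahat [Fintype Ω] [Fintype A] (v : A → Ω → ℝ) : Set A :=
  {a | ∃ π ∈ stdSimplex ℝ Ω, a ∈ br v π}

/-- Mixed actions supported on `B`. -/
def simplexOn [Fintype A] (B : Set A) : Set (A → ℝ) :=
  {α | α ∈ stdSimplex ℝ A ∧ ∀ a ∉ B, α a = 0}

/-- `(lam, p)` is a splitting of the prior. -/
def IsSplitting [Fintype Ω] {S : Type*} [Fintype S] (lam : S → ℝ) (p : S → Ω → ℝ)
    (prior : Ω → ℝ) : Prop :=
  (∀ s, 0 < lam s) ∧ (∑ s, lam s) = 1 ∧ (∀ s, p s ∈ stdSimplex ℝ Ω) ∧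
    ∀ ω, (∑ s, lam s * p s ω) = prior ω

/-- `(lam, p)` is an optimal splitting of the prior: it attains `cav ū (prior)`. -/
def IsOptimalSplitting [Fintype Ω] [Fintype A] (u v : A → Ω → ℝ) {S : Type*} [Fintype S]
    (lam : S → ℝ) (p : S → Ω → ℝ) (prior : Ω → ℝ) : Prop :=
  IsSplitting lam p prior ∧
    ∀ (T : Type) [Fintype T] [Nonempty T] (mu : T → ℝ) (q : T → Ω → ℝ),
      IsSplitting mu q prior →
        (∑ t, mu t * ubar u v (q t)) ≤ ∑ s, lam s * ubar u v (p s)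

/-- Beliefs at which `a` is optimal for the decision-maker. -/
def BRinv [Fintype Ω] [Fintype A] (v : A → Ω → ℝ) (a : A) : Set (Ω → ℝ) :=
  {π ∈ stdSimplex ℝ Ω | payP v a π = vbar v π}

/-- No redundant actions for the decision-maker. -/
def NoRedundantDM [Fintype Ω] [Fintype A] (v : A → Ω → ℝ) : Prop :=
  ∀ B : Set A, B.Nonempty → B ⊂ Ahat v →
    ∃ π ∈ stdSimplex ℝ Ω, ∀ a ∈ B, payP v a π < vbar v π

/-- No redundant actions for the experts. -/
def NoRedundantExperts [Fintype Ω] (u : A → Ω → ℝ) : Prop :=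
  ∀ a a' : A, a ≠ a' → ∃ ω, u a ω ≠ u a' ω

/-- The expert value function `ū` is concave on the simplex. -/
def UbarConcave [Fintype Ω] [Fintype A] (u v : A → Ω → ℝ) : Prop :=
  ∀ π ∈ stdSimplex ℝ Ω, ∀ π' ∈ stdSimplex ℝ Ω, ∀ t ∈ Set.Icc (0 : ℝ) 1,
    t * ubar u v π + (1 - t) * ubar u v π' ≤ ubar u v (fun ω => t * π ω + (1 - t) * π' ω)

section Aux

variable [Fintype Ω] [Fintype A]

/-- The Dirac mixed action on `b`. -/
noncomputable def dirac [DecidableEq A] (b : A) : A → ℝ := fun c => if c = b then 1 else 0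

lemma dirac_mem_stdSimplex [DecidableEq A] (b : A) : dirac b ∈ stdSimplex ℝ A := by
  constructor
  · intro c; unfold dirac; split <;> norm_num
  · simp [dirac]

lemma pay_eq_sum (u : A → Ω → ℝ) (α : A → ℝ) (π : Ω → ℝ) :
    pay u α π = ∑ c, α c * payP u c π := by
  simp [pay, payP, Finset.mul_sum, mul_assoc]

lemma pay_dirac [DecidableEq A] (u : A → Ω → ℝ) (b : A) (π : Ω → ℝ) :
    pay u (dirac b) π = payP u b π := by
  simp [pay_eq_sum, dirac, ite_mul]

lemma payP_combo (u : A → Ω → ℝ) (c : A) (s t : ℝ) (ρ π : Ω → ℝ) :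
    payP u c (fun ω => s * ρ ω + t * π ω) = s * payP u c ρ + t * payP u c π := by
  simp [payP, add_mul, Finset.sum_add_distrib, Finset.mul_sum, mul_assoc]

lemma payP_le_vbar (v : A → Ω → ℝ) (c : A) (π : Ω → ℝ) [Nonempty A] :
    payP v c π ≤ vbar v π :=
  le_ciSup (f := fun c => payP v c π) (Set.Finite.bddAbove (Set.finite_range _)) c

lemma vbar_exists (v : A → Ω → ℝ) (π : Ω → ℝ) [Nonempty A] :
    ∃ b, (∀ c, payP v c π ≤ payP v b π) ∧ vbar v π = payP v b π := by
  obtain ⟨b, hb⟩ := Finite.exists_max (fun c => payP v c π)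
  exact ⟨b, hb, le_antisymm (ciSup_le hb) (payP_le_vbar v b π)⟩

lemma dirac_mem_BR [DecidableEq A] (v : A → Ω → ℝ) (b : A) (π : Ω → ℝ)
    (hb : ∀ c, payP v c π ≤ payP v b π) : dirac b ∈ BR v π := by
  refine ⟨dirac_mem_stdSimplex b, fun α' hα' => ?_⟩
  rw [pay_dirac, pay_eq_sum]
  calc ∑ c, α' c * payP v c π ≤ ∑ c, α' c * payP v b π :=
        Finset.sum_le_sum fun c _ => mul_le_mul_of_nonneg_left (hb c) (hα'.1 c)
    _ = payP v b π := by rw [← Finset.sum_mul, hα'.2, one_mul]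

lemma pay_le_sup (u : A → Ω → ℝ) (α : A → ℝ) (π : Ω → ℝ) [Nonempty A]
    (hα : α ∈ stdSimplex ℝ A) : pay u α π ≤ ⨆ c, payP u c π := by
  rw [pay_eq_sum]
  calc ∑ c, α c * payP u c π ≤ ∑ c, α c * ⨆ c', payP u c' π :=
        Finset.sum_le_sum fun c _ => mul_le_mul_of_nonneg_left
          (le_ciSup (f := fun c' => payP u c' π) (Set.Finite.bddAbove (Set.finite_range _)) c) (hα.1 c)
    _ = ⨆ c', payP u c' π := by rw [← Finset.sum_mul, hα.2, one_mul]

lemma bddAbove_BR_image (u v : A → Ω → ℝ) (π : Ω → ℝ) [Nonempty A] :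
    BddAbove ((fun α => pay u α π) '' BR v π) := by
  refine ⟨⨆ c, payP u c π, ?_⟩
  rintro x ⟨α, hα, rfl⟩
  exact pay_le_sup u α π hα.1

lemma ubar_ge_of_opt (u v : A → Ω → ℝ) (b : A) (π : Ω → ℝ) [Nonempty A]
    (hb : payP v b π = vbar v π) : payP u b π ≤ ubar u v π := by
  classical
  have hmax : ∀ c, payP v c π ≤ payP v b π := fun c => hb ▸ payP_le_vbar v c π
  exact le_csSup (bddAbove_BR_image u v π)
    ⟨dirac b, dirac_mem_BR v b π hmax, pay_dirac u b π⟩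

lemma ubar_eq_of_unique (u v : A → Ω → ℝ) (b : A) (π : Ω → ℝ) [Nonempty A]
    (hb : ∀ c, c ≠ b → payP v c π < payP v b π) : ubar u v π = payP u b π := by
  classical
  have hmax : ∀ c, payP v c π ≤ payP v b π := by
    intro c; by_cases hc : c = b
    · subst hc; exact le_refl _
    · exact (hb c hc).le
  have him : (fun α => pay u α π) '' BR v π = {payP u b π} := by
    ext x
    constructor
    · rintro ⟨α, ⟨hαs, hopt⟩, rfl⟩
      show pay u α π = payP u b π
      have h1 : payP v b π ≤ ∑ c, α c * payP v c π := by
        have := hopt (dirac b) (dirac_mem_stdSimplex b)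
        rwa [pay_dirac, pay_eq_sum] at this
      have hzero : ∀ c, c ≠ b → α c = 0 := by
        intro c₀ hc₀
        by_contra hne
        have hpos : 0 < α c₀ := lt_of_le_of_ne (hαs.1 c₀) (Ne.symm hne)
        have hlt : ∑ c, α c * payP v c π < ∑ c, α c * payP v b π := by
          refine Finset.sum_lt_sum
            (fun c _ => mul_le_mul_of_nonneg_left (hmax c) (hαs.1 c))
            ⟨c₀, Finset.mem_univ _, ?_⟩
          exact mul_lt_mul_of_pos_left (hb c₀ hc₀) hpos
        have heq : ∑ c, α c * payP v b π = payP v b π := by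
          rw [← Finset.sum_mul, hαs.2, one_mul]
        rw [heq] at hlt
        exact absurd h1 (not_le.2 hlt)
      have hαb : α b = 1 := by
        have := hαs.2
        rwa [Finset.sum_eq_single b (fun c _ hc => hzero c hc) (fun h => absurd (Finset.mem_univ b) h)] at this
      rw [pay_eq_sum, Finset.sum_eq_single b
        (fun c _ hc => by rw [hzero c hc, zero_mul]) (fun h => absurd (Finset.mem_univ b) h),
        hαb, one_mul]
    · rintro rfl
      exact ⟨dirac b, dirac_mem_BR v b π hmax, pay_dirac u b π⟩
  rw [ubar, him, csSup_singleton]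

end Aux

/-- First part of Claim 3 in the proof of Lemma 2. -/
theorem conflict_of_interest_relint {Ω A : Type*} [Fintype Ω] [Nonempty Ω] [Fintype A] [Nonempty A]
    (u v : A → Ω → ℝ) (hnr : NoRedundantDM v) (hconc : UbarConcave u v)
    (a a' : A) (ha : a ∈ Ahat v) (ha' : a' ∈ Ahat v)
    (π : Ω → ℝ) (hπ : π ∈ intrinsicInterior ℝ (BRinv v a)) :
    payP u a π ≤ payP u a' π := by
  classical
  by_cases haa : a = a'
  · subst haa; exact le_refl _
  -- π is in BRinv v a
  have hπ' : π ∈ BRinv v a := intrinsicInterior_subset hπ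
  obtain ⟨hπs, hπopt⟩ := hπ'
  -- get a belief ρ where a' is the unique best reply
  obtain ⟨ρ, hρs, hstrict⟩ := hnr (Ahat v \ {a'})
    ⟨a, ha, by simp [haa]⟩
    ⟨Set.diff_subset, fun hsub => (hsub ha').2 rfl⟩
  have huniq : ∀ c, c ≠ a' → payP v c ρ < payP v a' ρ := by
    have hall : ∀ c, c ≠ a' → payP v c ρ < vbar v ρ := by
      intro c hc
      by_cases hcA : c ∈ Ahat v
      · exact hstrict c ⟨hcA, hc⟩
      · have : c ∉ br v ρ := fun hbr => hcA ⟨ρ, hρs, hbr⟩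
        simp only [br, Set.mem_setOf_eq, not_forall, not_le] at this
        obtain ⟨c', hc'⟩ := this
        exact lt_of_lt_of_le hc' (payP_le_vbar v c' ρ)
    obtain ⟨b, hbmax, hbeq⟩ := vbar_exists v ρ
    have hb : b = a' := by
      by_contra hbne
      exact absurd (hbeq ▸ hall b hbne) (lt_irrefl _)
    subst hb
    intro c hc
    exact hbeq ▸ hall c hc
  -- choose ε
  set D : A → ℝ := fun c => payP v a' ρ - payP v c ρ with hD
  set E : A → ℝ := fun c => payP v c π - payP v a' π with hE
  set f : A → ℝ := fun c => D c / (D c + |E c| + 1) with hf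
  have hES : (Finset.univ.erase a').Nonempty :=
    ⟨a, Finset.mem_erase.2 ⟨haa, Finset.mem_univ a⟩⟩
  set ε : ℝ := (Finset.univ.erase a').inf' hES f with hεdef
  have hdenom : ∀ c, c ≠ a' → 0 < D c + |E c| + 1 := by
    intro c hc
    have h1 : 0 < D c := sub_pos.2 (huniq c hc)
    have h2 : 0 ≤ |E c| := abs_nonneg _
    linarith
  have hε0 : 0 < ε := by
    rw [hεdef]
    refine (Finset.lt_inf'_iff hES).2 fun c hc => ?_
    have hc' := (Finset.mem_erase.1 hc).1
    exact div_pos (sub_pos.2 (huniq c hc')) (hdenom c hc')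
  have hε1 : ε ≤ 1 := by
    refine le_trans (Finset.inf'_le f (Finset.mem_erase.2 ⟨haa, Finset.mem_univ a⟩)) ?_
    have h1 : 0 < D a := sub_pos.2 (huniq a haa)
    have h2 : 0 ≤ |E a| := abs_nonneg _
    rw [hf]
    exact div_le_one_of_le₀ (by linarith) (by linarith)
  set mid : Ω → ℝ := fun ω => (1 - ε) * ρ ω + ε * π ω with hmiddef
  have hmids : mid ∈ stdSimplex ℝ Ω := by
    have := (convex_stdSimplex ℝ Ω) hρs hπs (by linarith : (0:ℝ) ≤ 1 - ε)
      hε0.le (by ring)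
    exact this
  have hmiduniq : ∀ c, c ≠ a' → payP v c mid < payP v a' mid := by
    intro c hc
    rw [hmiddef, payP_combo, payP_combo]
    have hεle : ε ≤ f c := Finset.inf'_le f (Finset.mem_erase.2 ⟨hc, Finset.mem_univ c⟩)
    have hkey : ε * (D c + |E c| + 1) ≤ D c := by
      rw [hf] at hεle
      exact (le_div_iff₀ (hdenom c hc)).1 hεle
    have habs : ε * E c ≤ ε * |E c| :=
      mul_le_mul_of_nonneg_left (le_abs_self _) hε0.le
    have hexp : ε * (D c + |E c| + 1) = ε * D c + ε * |E c| + ε := by ring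
    rw [hexp] at hkey
    have hgoal : ε * (D c + E c) < D c := by
      have : ε * (D c + E c) = ε * D c + ε * E c := by ring
      linarith [this]
    have hgoal' : ε * ((payP v a' ρ - payP v c ρ) + (payP v c π - payP v a' π))
        < payP v a' ρ - payP v c ρ := hgoal
    nlinarith [hgoal']
  -- values of ubar at ρ and mid
  have hub_ρ : ubar u v ρ = payP u a' ρ := ubar_eq_of_unique u v a' ρ huniq
  have hub_mid : ubar u v mid = payP u a' mid := ubar_eq_of_unique u v a' mid hmiduniq
  have hmidval : payP u a' mid = (1 - ε) * payP u a' ρ + ε * payP u a' π := by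
    rw [hmiddef, payP_combo]
  -- concavity
  have hcon := hconc ρ hρs π hπs (1 - ε) ⟨by linarith, by linarith⟩
  rw [show (1:ℝ) - (1 - ε) = ε from by ring] at hcon
  have hconmid : (1 - ε) * ubar u v ρ + ε * ubar u v π ≤ ubar u v mid := hcon
  rw [hub_ρ, hub_mid, hmidval] at hconmid
  have hub_le : ubar u v π ≤ payP u a' π :=
    le_of_mul_le_mul_left (by linarith) hε0
  exact le_trans (ubar_ge_of_opt u v a π hπopt) hub_le
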